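/- arXiv:2111.04652 — 3 statements merged into one kernel-verified Lean document; each statement's English description precedes it below -/
import Mathlib

section
/- For any matrix A ∈ ℝ^{p×p} and any ε > 0, A can be written as a finite sum A = Σ_i a_i · u_i ⊗ v_i where each u_i and each v_i is an s-sparse vector with unit Euclidean norm and Σ_i |a_i| ≤ ‖A‖_{Γ_s} + ε. (For rank-one A the decomposition achieves Σ_i |a_i| ≤ θ_s of its factors.) -/
open MeasureTheory ProbabilityTheory Finset

noncomputable section

/-- Vectors in ℝ^p. -/
abbrev Vec (p : ℕ) := Fin p → ℝ

/-- p × p real matrices. -/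
abbrev Mat (p : ℕ) := Matrix (Fin p) (Fin p) ℝ

/-- Euclidean (ℓ2) norm. -/
def l2 {p : ℕ} (u : Vec p) : ℝ := Real.sqrt (∑ i, (u i) ^ 2)

/-- ℓ1 norm. -/
def l1 {p : ℕ} (u : Vec p) : ℝ := ∑ i, |u i|

/-- Euclidean inner product. -/
def dotp {p : ℕ} (u v : Vec p) : ℝ := ∑ i, u i * v i

/-- θ_s(u,v) = (‖u‖₂ + s^{-1/2}‖u‖₁)(‖v‖₂ + s^{-1/2}‖v‖₁). -/
def theta {p : ℕ} (s : ℝ) (u v : Vec p) : ℝ :=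
  (l2 u + (Real.sqrt s)⁻¹ * l1 u) * (l2 v + (Real.sqrt s)⁻¹ * l1 v)

/-- Frobenius (Hilbert–Schmidt) inner product. -/
def frob {p : ℕ} (A B : Mat p) : ℝ := ∑ i, ∑ j, A i j * B i j

/-- Frobenius norm. -/
def frobNorm {p : ℕ} (A : Mat p) : ℝ := Real.sqrt (frob A A)

/-- The mixed atomic norm ‖B‖_{Γ_s}. -/
def mixedNorm {p : ℕ} (s : ℝ) (B : Mat p) : ℝ :=
  sInf { t | ∃ (K : ℕ) (u v : Fin K → Vec p),
    B = ∑ k, Matrix.vecMulVec (u k) (v k) ∧ t = ∑ k, theta s (u k) (v k) }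

/-- Dual norm of the mixed atomic norm. -/
def dualMixedNorm {p : ℕ} (s : ℝ) (Z : Mat p) : ℝ :=
  sSup { t | ∃ B : Mat p, mixedNorm s B ≤ 1 ∧ t = frob Z B }

/-- A vector is `s`-sparse if it has at most `s` nonzero entries. -/
def IsSparse {p : ℕ} (s : ℕ) (u : Vec p) : Prop := {i | u i ≠ 0}.ncard ≤ s

/-- Nuclear norm of a real matrix: the sum of its singular values. -/
def nuclearNorm {p : ℕ} (A : Mat p) : ℝ :=
  ∑ i, Real.sqrt ((Matrix.isHermitian_conjTranspose_mul_self A).eigenvalues i)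

/-- Operator (spectral) norm of a real matrix. -/
def opNorm {p : ℕ} (A : Mat p) : ℝ :=
  sSup { t | ∃ u v : Vec p, l2 u ≤ 1 ∧ l2 v ≤ 1 ∧ t = dotp (A.mulVec u) v }

/-- `X` has sub-Gaussian (ψ₂) norm at most `K`: `E exp(X²/K²) ≤ 2`. -/
def HasSubgaussianNorm {Ω : Type*} [MeasurableSpace Ω] (μ : Measure Ω) (X : Ω → ℝ) (K : ℝ) :
    Prop := ∫ ω, Real.exp ((X ω) ^ 2 / K ^ 2) ∂μ ≤ 2

/-- `W` is a subgradient of the mixed atomic norm `‖·‖_{Γ_s}` at `B`. -/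
def InSubdiff {p : ℕ} (s : ℝ) (W B : Mat p) : Prop :=
  ∀ C : Mat p, mixedNorm s B + frob W (C - B) ≤ mixedNorm s C

namespace AtomicAux

variable {p : ℕ}

lemma l2_nonneg (u : Vec p) : 0 ≤ l2 u := Real.sqrt_nonneg _

lemma l1_nonneg (u : Vec p) : 0 ≤ l1 u := Finset.sum_nonneg fun i _ => abs_nonneg _

lemma theta_nonneg (s : ℝ) (u v : Vec p) : 0 ≤ theta s u v := by
  have h1 : (0:ℝ) ≤ (Real.sqrt s)⁻¹ := inv_nonneg.2 (Real.sqrt_nonneg _)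
  exact mul_nonneg (add_nonneg (l2_nonneg u) (mul_nonneg h1 (l1_nonneg u)))
    (add_nonneg (l2_nonneg v) (mul_nonneg h1 (l1_nonneg v)))

lemma l2_smul (c : ℝ) (u : Vec p) : l2 (c • u) = |c| * l2 u := by
  unfold l2
  have h : ∑ i, ((c • u) i) ^ 2 = c ^ 2 * ∑ i, (u i) ^ 2 := by
    rw [Finset.mul_sum]
    refine Finset.sum_congr rfl fun i _ => ?_
    simp [mul_pow]
  rw [h, Real.sqrt_mul (sq_nonneg c), Real.sqrt_sq_eq_abs]

lemma l2_eq_zero {u : Vec p} (h : l2 u = 0) : u = 0 := by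
  unfold l2 at h
  have h2 : ∑ i, (u i) ^ 2 = 0 := by
    have := Real.sqrt_eq_zero (Finset.sum_nonneg fun i _ => sq_nonneg _) |>.1 h
    exact this
  funext i
  have := (Finset.sum_eq_zero_iff_of_nonneg (fun i _ => sq_nonneg (u i))).1 h2 i (Finset.mem_univ i)
  exact pow_eq_zero_iff (by norm_num) |>.1 this

lemma l2_pos {u : Vec p} (h : u ≠ 0) : 0 < l2 u :=
  lt_of_le_of_ne (l2_nonneg u) (fun h2 => h (l2_eq_zero h2.symm))

/-- Finset support of a vector. -/
def Fsupp (x : Vec p) : Finset (Fin p) := Finset.univ.filter (fun i => x i ≠ 0)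

lemma mem_Fsupp {x : Vec p} {i : Fin p} : i ∈ Fsupp x ↔ x i ≠ 0 := by
  simp [Fsupp]

lemma isSparse_of_card {s : ℕ} {x : Vec p} (h : (Fsupp x).card ≤ s) : IsSparse s x := by
  unfold IsSparse
  have : {i | x i ≠ 0} = ↑(Fsupp x) := by ext i; simp [mem_Fsupp]
  rw [this, Set.ncard_coe_finset]
  exact h

lemma l2_le_sqrt_card {s : ℕ} {x : Vec p} {M : ℝ} (hM : 0 ≤ M)
    (hcard : (Fsupp x).card ≤ s) (hb : ∀ i, |x i| ≤ M) :
    l2 x ≤ Real.sqrt s * M := by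
  unfold l2
  have key : ∑ i, (x i) ^ 2 ≤ (s : ℝ) * M ^ 2 := by
    have h1 : ∑ i, (x i) ^ 2 = ∑ i ∈ Fsupp x, (x i) ^ 2 := by
      refine (Finset.sum_subset (Finset.subset_univ _) ?_).symm
      intro i _ hi
      have : x i = 0 := by by_contra h; exact hi (mem_Fsupp.2 h)
      simp [this]
    have h2 : ∑ i ∈ Fsupp x, (x i) ^ 2 ≤ ∑ _i ∈ Fsupp x, M ^ 2 := by
      refine Finset.sum_le_sum fun i _ => ?_
      have := hb i
      calc (x i)^2 = |x i|^2 := (sq_abs _).symm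
        _ ≤ M ^ 2 := by nlinarith [abs_nonneg (x i)]
    rw [h1]
    calc ∑ i ∈ Fsupp x, (x i)^2 ≤ (Fsupp x).card * M ^ 2 := by
          simpa using h2
      _ ≤ (s:ℝ) * M ^ 2 := by
          have : ((Fsupp x).card : ℝ) ≤ (s:ℝ) := by exact_mod_cast hcard
          nlinarith [sq_nonneg M]
  calc Real.sqrt (∑ i, (x i)^2) ≤ Real.sqrt ((s:ℝ) * M^2) := Real.sqrt_le_sqrt key
    _ = Real.sqrt s * M := by
        rw [Real.sqrt_mul (Nat.cast_nonneg s) (M^2), Real.sqrt_sq hM]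

/-- decomposition of a vector supported on ≤ s coordinates. -/
lemma small_decomp {s : ℕ} {x : Vec p} (hcard : (Fsupp x).card ≤ s) :
    ∃ (K : ℕ) (c : Fin K → ℝ) (w : Fin K → Vec p),
      x = ∑ k, c k • w k ∧ (∀ k, IsSparse s (w k) ∧ l2 (w k) = 1) ∧
      ∑ k, |c k| ≤ l2 x := by
  by_cases hx : x = 0
  · refine ⟨0, ![], ![], by simp [hx], by intro k; exact k.elim0, by simp [l2_nonneg]⟩
  · have hpos := l2_pos hx
    refine ⟨1, ![l2 x], ![(l2 x)⁻¹ • x], ?_, ?_, ?_⟩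
    · rw [Fin.sum_univ_one]
      show x = l2 x • ((l2 x)⁻¹ • x)
      rw [smul_smul, mul_inv_cancel₀ (ne_of_gt hpos), one_smul]
    · intro k
      have hk : (![(l2 x)⁻¹ • x] : Fin 1 → Vec p) k = (l2 x)⁻¹ • x := by
        fin_cases k; rfl
      rw [hk]
      constructor
      · refine isSparse_of_card (le_trans (Finset.card_le_card ?_) hcard)
        intro i hi
        rw [mem_Fsupp] at hi ⊢
        intro h0
        exact hi (by simp [h0])
      · rw [l2_smul, abs_of_nonneg (inv_nonneg.2 (le_of_lt hpos)),
          inv_mul_cancel₀ (ne_of_gt hpos)]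
    · rw [Fin.sum_univ_one]
      show |l2 x| ≤ l2 x
      rw [abs_of_nonneg (l2_nonneg x)]


/-- choose the `s` largest coordinates (for `f`) inside `F`. -/
lemma exists_top : ∀ (s : ℕ) (F : Finset (Fin p)) (f : Fin p → ℝ), s ≤ F.card →
    ∃ T : Finset (Fin p), T ⊆ F ∧ T.card = s ∧
      ∀ i ∈ F, i ∉ T → ∀ j ∈ T, f i ≤ f j := by
  intro s
  induction s with
  | zero => intro F f _; exact ⟨∅, Finset.empty_subset _, rfl, by simp⟩
  | succ s ih =>
    intro F f hs
    have hne : F.Nonempty := Finset.card_pos.1 (lt_of_lt_of_le (Nat.succ_pos s) hs)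
    obtain ⟨j₀, hj₀F, hmax⟩ := Finset.exists_max_image F f hne
    have hcard : s ≤ (F.erase j₀).card := by
      rw [Finset.card_erase_of_mem hj₀F]; omega
    obtain ⟨T', hT'sub, hT'card, hT'top⟩ := ih (F.erase j₀) f hcard
    have hj₀T' : j₀ ∉ T' := fun h => (Finset.mem_erase.1 (hT'sub h)).1 rfl
    refine ⟨insert j₀ T', ?_, ?_, ?_⟩
    · intro i hi
      rcases Finset.mem_insert.1 hi with rfl | hi
      · exact hj₀F
      · exact Finset.mem_of_mem_erase (hT'sub hi)
    · rw [Finset.card_insert_of_notMem hj₀T', hT'card]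
    · intro i hiF hiT j hj
      rcases Finset.mem_insert.1 hj with rfl | hj
      · exact hmax i hiF
      · have hij : i ≠ j₀ := fun h => hiT (h ▸ Finset.mem_insert_self _ _)
        exact hT'top i (Finset.mem_erase.2 ⟨hij, hiF⟩)
          (fun h => hiT (Finset.mem_insert_of_mem h)) j hj


lemma base_decomp {s : ℕ} {x : Vec p} {M : ℝ} (hM : 0 ≤ M)
    (hcard : (Fsupp x).card ≤ s) (hb : ∀ i, |x i| ≤ M) :
    ∃ (K : ℕ) (c : Fin K → ℝ) (w : Fin K → Vec p),
      x = ∑ k, c k • w k ∧ (∀ k, IsSparse s (w k) ∧ l2 (w k) = 1) ∧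
      ∑ k, |c k| ≤ l2 x + (Real.sqrt s)⁻¹ * l1 x ∧
      ∑ k, |c k| ≤ Real.sqrt s * M + (Real.sqrt s)⁻¹ * l1 x := by
  obtain ⟨K, c, w, hrep, hprops, hle⟩ := small_decomp hcard
  have hinv : (0:ℝ) ≤ (Real.sqrt s)⁻¹ * l1 x :=
    mul_nonneg (inv_nonneg.2 (Real.sqrt_nonneg _)) (l1_nonneg x)
  exact ⟨K, c, w, hrep, hprops, by linarith,
    by have := l2_le_sqrt_card hM hcard hb; linarith⟩

lemma decomp_aux {s : ℕ} (hs : 0 < s) :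
    ∀ (n : ℕ) (x : Vec p) (M : ℝ), 0 ≤ M → (Fsupp x).card ≤ n → (∀ i, |x i| ≤ M) →
    ∃ (K : ℕ) (c : Fin K → ℝ) (w : Fin K → Vec p),
      x = ∑ k, c k • w k ∧ (∀ k, IsSparse s (w k) ∧ l2 (w k) = 1) ∧
      ∑ k, |c k| ≤ l2 x + (Real.sqrt s)⁻¹ * l1 x ∧
      ∑ k, |c k| ≤ Real.sqrt s * M + (Real.sqrt s)⁻¹ * l1 x := by
  have hsqrt : (0:ℝ) < Real.sqrt s := Real.sqrt_pos.2 (by exact_mod_cast hs)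
  have hinv : (0:ℝ) ≤ (Real.sqrt s)⁻¹ := inv_nonneg.2 hsqrt.le
  intro n
  induction n with
  | zero =>
    intro x M hM hn hb
    exact base_decomp hM (le_trans hn (Nat.zero_le s)) hb
  | succ n ih =>
    intro x M hM hn hb
    by_cases hc : (Fsupp x).card ≤ s
    · exact base_decomp hM hc hb
    push_neg at hc
    obtain ⟨T, hTsub, hTcard, htop⟩ := exists_top s (Fsupp x) (fun i => |x i|) hc.le
    set xT : Vec p := fun i => if i ∈ T then x i else 0 with hxT
    set xC : Vec p := fun i => if i ∈ T then 0 else x i with hxC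
    have hsplit : x = xT + xC := by
      funext i; by_cases h : i ∈ T <;> simp [hxT, hxC, h]
    have hTne : T.Nonempty := Finset.card_pos.1 (by omega)
    obtain ⟨j₁, hj₁T, hmin⟩ := Finset.exists_min_image T (fun i => |x i|) hTne
    set M' := |x j₁| with hM'def
    have hM' : 0 ≤ M' := abs_nonneg _
    have hbC : ∀ i, |xC i| ≤ M' := by
      intro i
      by_cases h : i ∈ T
      · simp [hxC, h, hM']
      · simp only [hxC, if_neg h]
        by_cases h0 : x i = 0
        · simp [h0, hM']
        · exact htop i (mem_Fsupp.2 h0) h j₁ hj₁T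
    have hl1T : l1 xT = ∑ i ∈ T, |x i| := by
      unfold l1
      rw [← Finset.sum_subset (Finset.subset_univ T)
        (fun i _ hi => by simp [hxT, hi])]
      exact Finset.sum_congr rfl fun i hi => by simp [hxT, hi]
    have hl1split : l1 x = l1 xT + l1 xC := by
      unfold l1
      rw [← Finset.sum_add_distrib]
      refine Finset.sum_congr rfl fun i _ => ?_
      by_cases h : i ∈ T <;> simp [hxT, hxC, h]
    have hsM' : (s:ℝ) * M' ≤ l1 xT := by
      rw [hl1T]
      have h1 : ∑ _i ∈ T, M' ≤ ∑ i ∈ T, |x i| :=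
        Finset.sum_le_sum fun i hi => hmin i hi
      calc (s:ℝ) * M' = T.card * M' := by rw [hTcard]
        _ = ∑ _i ∈ T, M' := by rw [Finset.sum_const, nsmul_eq_mul]
        _ ≤ _ := h1
    have key : Real.sqrt s * M' ≤ (Real.sqrt s)⁻¹ * l1 xT := by
      have h2 : (Real.sqrt s)⁻¹ * ((s:ℝ) * M') = Real.sqrt s * M' := by
        calc (Real.sqrt (s:ℝ))⁻¹ * ((s:ℝ) * M') = ((s:ℝ) / Real.sqrt (s:ℝ)) * M' := by ring
          _ = Real.sqrt (s:ℝ) * M' := by rw [Real.div_sqrt]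
      rw [← h2]
      exact mul_le_mul_of_nonneg_left hsM' hinv
    have hsubT : Fsupp xT ⊆ T := by
      intro i hi
      rw [mem_Fsupp] at hi
      by_contra h
      exact hi (by simp [hxT, h])
    have hcardT : (Fsupp xT).card ≤ s :=
      le_trans (Finset.card_le_card hsubT) (le_of_eq hTcard)
    have hsuppC : Fsupp xC = Fsupp x \ T := by
      ext i
      rw [Finset.mem_sdiff, mem_Fsupp, mem_Fsupp]
      by_cases h : i ∈ T <;> simp [hxC, h]
    have hcardC : (Fsupp xC).card ≤ n := by
      rw [hsuppC, Finset.card_sdiff_of_subset hTsub, hTcard]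
      omega
    have hbT : ∀ i, |xT i| ≤ M := by
      intro i; by_cases h : i ∈ T
      · simpa [hxT, h] using hb i
      · simp [hxT, h, hM]
    have hl2T : l2 xT ≤ Real.sqrt s * M := l2_le_sqrt_card hM hcardT hbT
    have hl2Tx : l2 xT ≤ l2 x := by
      unfold l2
      apply Real.sqrt_le_sqrt
      refine Finset.sum_le_sum fun i _ => ?_
      by_cases h : i ∈ T
      · simp [hxT, h]
      · simp [hxT, h, sq_nonneg]
    obtain ⟨K₀, c₀, w₀, hrep₀, hprop₀, hle₀⟩ := small_decomp hcardT
    obtain ⟨K', c', w', hrep', hprop', hle1', hle2'⟩ := ih xC M' hM' hcardC hbC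
    have habs : ∑ k, |Fin.append c₀ c' k| = (∑ k, |c₀ k|) + ∑ k, |c' k| := by
      rw [Fin.sum_univ_add]
      simp [Fin.append_left, Fin.append_right]
    have hdist : (Real.sqrt s)⁻¹ * l1 x
        = (Real.sqrt s)⁻¹ * l1 xT + (Real.sqrt s)⁻¹ * l1 xC := by
      rw [hl1split, mul_add]
    refine ⟨K₀ + K', Fin.append c₀ c', Fin.append w₀ w', ?_, ?_, ?_, ?_⟩
    · rw [Fin.sum_univ_add]
      simp only [Fin.append_left, Fin.append_right]
      rw [hsplit, hrep₀, hrep']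
    · intro k
      refine Fin.addCases (fun i => ?_) (fun i => ?_) k
      · simpa [Fin.append_left] using hprop₀ i
      · simpa [Fin.append_right] using hprop' i
    · rw [habs]
      linarith
    · rw [habs]
      linarith


lemma vec_decomp {s : ℕ} (hs : 0 < s) (x : Vec p) :
    ∃ (K : ℕ) (c : Fin K → ℝ) (w : Fin K → Vec p),
      x = ∑ k, c k • w k ∧ (∀ k, IsSparse s (w k) ∧ l2 (w k) = 1) ∧
      ∑ k, |c k| ≤ l2 x + (Real.sqrt s)⁻¹ * l1 x := by
  obtain ⟨K, c, w, h1, h2, h3, _⟩ := decomp_aux hs (Fsupp x).card x (l1 x) (l1_nonneg x) le_rfl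
    (fun i => Finset.single_le_sum (f := fun j => |x j|) (fun j _ => abs_nonneg _)
      (Finset.mem_univ i))
  exact ⟨K, c, w, h1, h2, h3⟩

lemma rank_one {s : ℕ} (hs : 0 < s) (x y : Vec p) :
    ∃ (K : ℕ) (a : Fin K → ℝ) (u v : Fin K → Vec p),
      Matrix.vecMulVec x y = ∑ k, a k • Matrix.vecMulVec (u k) (v k) ∧
      (∀ k, IsSparse s (u k) ∧ l2 (u k) = 1 ∧ IsSparse s (v k) ∧ l2 (v k) = 1) ∧
      ∑ k, |a k| ≤ theta (s : ℝ) x y := by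
  obtain ⟨Kx, c, w, hx, hwx, hcx⟩ := vec_decomp hs x
  obtain ⟨Ky, d, z, hy, hwy, hcy⟩ := vec_decomp hs y
  have hmat : Matrix.vecMulVec x y
      = ∑ i : Fin Kx, ∑ j : Fin Ky, (c i * d j) • Matrix.vecMulVec (w i) (z j) := by
    ext a b
    have hxa : x a = ∑ i, c i * w i a := by
      rw [hx]; simp [Finset.sum_apply]
    have hyb : y b = ∑ j, d j * z j b := by
      rw [hy]; simp [Finset.sum_apply]
    simp only [Matrix.vecMulVec_apply, Matrix.sum_apply, Matrix.smul_apply, smul_eq_mul]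
    rw [hxa, hyb, Finset.sum_mul_sum]
    refine Finset.sum_congr rfl fun i _ => Finset.sum_congr rfl fun j _ => ?_
    ring
  refine ⟨Kx * Ky, fun k => c (finProdFinEquiv.symm k).1 * d (finProdFinEquiv.symm k).2,
    fun k => w (finProdFinEquiv.symm k).1, fun k => z (finProdFinEquiv.symm k).2, ?_, ?_, ?_⟩
  · calc Matrix.vecMulVec x y
        = ∑ q : Fin Kx × Fin Ky, (c q.1 * d q.2) • Matrix.vecMulVec (w q.1) (z q.2) := by
          rw [hmat, Fintype.sum_prod_type]
      _ = _ := (Equiv.sum_comp finProdFinEquiv.symm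
          (fun q : Fin Kx × Fin Ky => (c q.1 * d q.2) • Matrix.vecMulVec (w q.1) (z q.2))).symm
  · intro k
    exact ⟨(hwx _).1, (hwx _).2, (hwy _).1, (hwy _).2⟩
  · have h1 : (∑ k : Fin (Kx * Ky),
        |c (finProdFinEquiv.symm k).1 * d (finProdFinEquiv.symm k).2|)
        = ∑ q : Fin Kx × Fin Ky, |c q.1 * d q.2| :=
      Equiv.sum_comp finProdFinEquiv.symm (fun q : Fin Kx × Fin Ky => |c q.1 * d q.2|)
    rw [h1]
    have h2 : ∑ q : Fin Kx × Fin Ky, |c q.1 * d q.2| = (∑ i, |c i|) * (∑ j, |d j|) := by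
      rw [Finset.sum_mul_sum, Fintype.sum_prod_type]
      exact Finset.sum_congr rfl fun i _ => Finset.sum_congr rfl fun j _ => abs_mul _ _
    rw [h2]
    unfold theta
    exact mul_le_mul hcx hcy (Finset.sum_nonneg fun j _ => abs_nonneg _)
      (add_nonneg (l2_nonneg x) (mul_nonneg (inv_nonneg.2 (Real.sqrt_nonneg _)) (l1_nonneg x)))

end AtomicAux

/-- Lemma A.1, decomposition part. Any matrix decomposes into s-sparse unit-norm
rank-one atoms with total weight at most `‖A‖_{Γ_s} + ε`; for a rank-one matrix `x ⊗ y` the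
weight can be taken at most `θ_s(x,y)`. -/
theorem atomic_decomposition {p s : ℕ} (hs : 0 < s) :
    (∀ (A : Mat p) (ε : ℝ), 0 < ε →
      ∃ (K : ℕ) (a : Fin K → ℝ) (u v : Fin K → Vec p),
        A = ∑ k, a k • Matrix.vecMulVec (u k) (v k) ∧
        (∀ k, IsSparse s (u k) ∧ l2 (u k) = 1 ∧ IsSparse s (v k) ∧ l2 (v k) = 1) ∧
        ∑ k, |a k| ≤ mixedNorm (s : ℝ) A + ε) ∧
    (∀ x y : Vec p,
      ∃ (K : ℕ) (a : Fin K → ℝ) (u v : Fin K → Vec p),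
        Matrix.vecMulVec x y = ∑ k, a k • Matrix.vecMulVec (u k) (v k) ∧
        (∀ k, IsSparse s (u k) ∧ l2 (u k) = 1 ∧ IsSparse s (v k) ∧ l2 (v k) = 1) ∧
        ∑ k, |a k| ≤ theta (s : ℝ) x y) := by
  constructor
  · intro A ε hε
    set S := { t | ∃ (K : ℕ) (u v : Fin K → Vec p),
      A = ∑ k, Matrix.vecMulVec (u k) (v k) ∧ t = ∑ k, theta (s:ℝ) (u k) (v k) } with hSdef
    have hmn : mixedNorm (s:ℝ) A = sInf S := rfl
    have hSne : S.Nonempty := by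
      refine ⟨∑ k : Fin p, theta (s:ℝ) (fun i => if i = k then (1:ℝ) else 0) (A k), p,
        fun k i => if i = k then (1:ℝ) else 0, fun k => A k, ?_, rfl⟩
      ext i j
      simp [Matrix.sum_apply, Matrix.vecMulVec_apply, ite_mul]
    obtain ⟨t, htS, htlt⟩ := exists_lt_of_csInf_lt hSne
      (lt_add_of_pos_right (sInf S) hε)
    obtain ⟨K, u, v, hArep, rfl⟩ := htS
    choose m a uu vv hrep hprops hbound using
      fun k : Fin K => AtomicAux.rank_one (p := p) hs (u k) (v k)
    set σ := (Σ k : Fin K, Fin (m k)) with hσ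
    set e : σ ≃ Fin (Fintype.card σ) := Fintype.equivFin σ with he
    have hsig : ∀ (g : σ → Mat p), ∑ q, g q = ∑ k, ∑ j, g ⟨k, j⟩ := by
      intro g
      rw [← Finset.univ_sigma_univ, Finset.sum_sigma]
    have hsigR : ∀ (g : σ → ℝ), ∑ q, g q = ∑ k, ∑ j, g ⟨k, j⟩ := by
      intro g
      rw [← Finset.univ_sigma_univ, Finset.sum_sigma]
    refine ⟨Fintype.card σ, fun i => a (e.symm i).1 (e.symm i).2,
      fun i => uu (e.symm i).1 (e.symm i).2, fun i => vv (e.symm i).1 (e.symm i).2, ?_, ?_, ?_⟩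
    · calc A = ∑ k, Matrix.vecMulVec (u k) (v k) := hArep
        _ = ∑ k, ∑ j, a k j • Matrix.vecMulVec (uu k j) (vv k j) := by
            exact Finset.sum_congr rfl fun k _ => hrep k
        _ = ∑ q : σ, a q.1 q.2 • Matrix.vecMulVec (uu q.1 q.2) (vv q.1 q.2) := by
            rw [hsig (fun q : σ => a q.1 q.2 • Matrix.vecMulVec (uu q.1 q.2) (vv q.1 q.2))]
        _ = _ := (Equiv.sum_comp e.symm
            (fun q : σ => a q.1 q.2 • Matrix.vecMulVec (uu q.1 q.2) (vv q.1 q.2))).symm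
    · intro i
      exact hprops (e.symm i).1 (e.symm i).2
    · have h1 : (∑ i : Fin (Fintype.card σ), |a (e.symm i).1 (e.symm i).2|)
          = ∑ q : σ, |a q.1 q.2| :=
        Equiv.sum_comp e.symm (fun q : σ => |a q.1 q.2|)
      rw [h1, hsigR (fun q : σ => |a q.1 q.2|)]
      have h2 : ∑ k, ∑ j, |a k j| ≤ ∑ k, theta (s:ℝ) (u k) (v k) :=
        Finset.sum_le_sum fun k _ => hbound k
      rw [hmn]
      exact le_of_lt (lt_of_le_of_lt h2 htlt)
  · exact fun x y => AtomicAux.rank_one hs x y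
end
end

section
/- For any matrix Z ∈ ℝ^{p×p}, the supremum of ⟨Z, A⟩ over matrices A with mixed atomic norm ‖A‖_{Γ_s} ≤ 1 is at most the supremum of ⟨Zu, v⟩ over pairs of vectors u, v ∈ ℝ^p with ‖u‖₂ ≤ 1, ‖v‖₂ ≤ 1 and u, v both s-sparse. -/
open MeasureTheory ProbabilityTheory Finset

noncomputable section

lemma l2_nonneg {p : ℕ} (u : Vec p) : 0 ≤ l2 u := Real.sqrt_nonneg _

lemma l1_nonneg {p : ℕ} (u : Vec p) : 0 ≤ l1 u := Finset.sum_nonneg fun i _ => abs_nonneg _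

lemma abs_le_l2 {p : ℕ} (u : Vec p) (j : Fin p) : |u j| ≤ l2 u := by
  rw [← Real.sqrt_sq_eq_abs]
  exact Real.sqrt_le_sqrt (Finset.single_le_sum (f := fun i => (u i)^2) (fun i _ => sq_nonneg _) (mem_univ j))

lemma l2_eq_zero {p : ℕ} {u : Vec p} (h : l2 u = 0) : u = 0 := by
  have h2 : ∑ i, (u i)^2 = 0 := by
    have h1 := (Real.sqrt_eq_zero' (x := ∑ i, (u i)^2)).mp h
    have hn : 0 ≤ ∑ i, (u i)^2 := Finset.sum_nonneg fun i _ => sq_nonneg _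
    linarith
  funext i
  have := (Finset.sum_eq_zero_iff_of_nonneg (fun i _ => sq_nonneg (u i))).mp h2 i (mem_univ i)
  simpa using pow_eq_zero_iff (n := 2) (by norm_num) |>.mp this

lemma l2_smul {p : ℕ} (c : ℝ) (u : Vec p) : l2 (c • u) = |c| * l2 u := by
  unfold l2
  rw [← Real.sqrt_sq_eq_abs, ← Real.sqrt_mul (sq_nonneg c), Finset.mul_sum]
  congr 1
  apply Finset.sum_congr rfl
  intro i _; simp [Pi.smul_apply, smul_eq_mul]; ring

lemma sparse_smul {p s : ℕ} {u : Vec p} (c : ℝ) (h : IsSparse s u) : IsSparse s (c • u) := by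
  refine le_trans (Set.ncard_le_ncard ?_ (Set.toFinite _)) h
  intro i hi
  simp only [Set.mem_setOf_eq, Pi.smul_apply, smul_eq_mul] at hi ⊢
  intro h0; exact hi (by rw [h0, mul_zero])

lemma sparse_iff_card {p s : ℕ} (u : Vec p) :
    IsSparse s u ↔ (univ.filter (fun i => u i ≠ 0)).card ≤ s := by
  unfold IsSparse
  rw [Set.ncard_eq_toFinset_card']
  congr! 2
  ext i; simp

lemma sparse_iff_card' {p s : ℕ} (u : Vec p) :
    IsSparse s u ↔ (univ.filter (fun i => u i ≠ 0)).card ≤ s := by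
  unfold IsSparse
  rw [Set.ncard_eq_toFinset_card']
  congr! 2
  ext i; simp

lemma sparse_l2_le {p s : ℕ} {u : Vec p} {c : ℝ} (hu : IsSparse s u) (hc : 0 ≤ c)
    (h : ∀ i, |u i| ≤ c) : l2 u ≤ Real.sqrt s * c := by
  have key : ∑ i, (u i)^2 ≤ (s : ℝ) * c^2 := by
    rw [← Finset.sum_filter_add_sum_filter_not univ (fun i => u i ≠ 0)]
    have h2 : ∑ i ∈ univ.filter (fun i => ¬ u i ≠ 0), (u i)^2 = 0 := by
      apply Finset.sum_eq_zero; intro i hi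
      simp only [mem_filter, not_not] at hi
      rw [hi.2]; ring
    rw [h2, add_zero]
    calc ∑ i ∈ univ.filter (fun i => u i ≠ 0), (u i)^2
        ≤ ∑ _i ∈ univ.filter (fun i => u i ≠ 0), c^2 := by
          apply Finset.sum_le_sum; intro i _
          rw [← sq_abs]; exact pow_le_pow_left₀ (abs_nonneg _) (h i) 2
      _ = (univ.filter (fun i => u i ≠ 0)).card * c^2 := by rw [Finset.sum_const, nsmul_eq_mul]
      _ ≤ (s:ℝ) * c^2 := by
          apply mul_le_mul_of_nonneg_right _ (sq_nonneg c)
          exact_mod_cast (sparse_iff_card' u).mp hu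
  calc l2 u ≤ Real.sqrt ((s:ℝ) * c^2) := Real.sqrt_le_sqrt key
    _ = Real.sqrt s * c := by rw [Real.sqrt_mul (Nat.cast_nonneg s), Real.sqrt_sq hc]

lemma frob_vecMulVec {p : ℕ} (Z : Mat p) (u v : Vec p) :
    frob Z (Matrix.vecMulVec u v) = dotp (Z.mulVec v) u := by
  unfold frob dotp Matrix.mulVec Matrix.vecMulVec
  simp only [Matrix.of_apply, dotProduct]
  apply Finset.sum_congr rfl; intro i _
  rw [Finset.sum_mul]
  apply Finset.sum_congr rfl; intro j _; ring

lemma frob_sum {p : ℕ} (Z : Mat p) {K : ℕ} (B : Fin K → Mat p) :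
    frob Z (∑ k, B k) = ∑ k, frob Z (B k) := by
  unfold frob
  calc ∑ i, ∑ j, Z i j * (∑ k, B k) i j
      = ∑ i, ∑ j, ∑ k, Z i j * B k i j := by
        apply Finset.sum_congr rfl; intro i _
        apply Finset.sum_congr rfl; intro j _
        simp [Matrix.sum_apply, Finset.mul_sum]
    _ = ∑ i, ∑ k, ∑ j, Z i j * B k i j := by
        apply Finset.sum_congr rfl; intro i _
        exact Finset.sum_comm
    _ = ∑ k, ∑ i, ∑ j, Z i j * B k i j := Finset.sum_comm

lemma vecMulVec_sum {p : ℕ} {K L : ℕ} (a : Fin K → Vec p) (b : Fin L → Vec p) :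
    Matrix.vecMulVec (∑ k, a k) (∑ l, b l) = ∑ k, ∑ l, Matrix.vecMulVec (a k) (b l) := by
  funext i j
  simp only [Matrix.vecMulVec, Matrix.of_apply, Matrix.sum_apply, Finset.sum_apply]
  rw [Finset.sum_mul_sum]

lemma vecMulVec_smul {p : ℕ} (c d : ℝ) (u v : Vec p) :
    Matrix.vecMulVec (c • u) (d • v) = (c*d) • Matrix.vecMulVec u v := by
  funext i j
  simp [Matrix.vecMulVec, Matrix.smul_apply]; ring

lemma frob_smul {p : ℕ} (Z : Mat p) (c : ℝ) (B : Mat p) :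
    frob Z (c • B) = c * frob Z B := by
  unfold frob
  rw [Finset.mul_sum]
  apply Finset.sum_congr rfl; intro i _
  rw [Finset.mul_sum]
  apply Finset.sum_congr rfl; intro j _
  simp [Matrix.smul_apply]; ring

lemma exists_top_block {p s : ℕ} (hsp : s ≤ p) (u : Vec p) :
    ∃ T : Finset (Fin p), T.card = s ∧ ∀ i ∈ T, ∀ j ∉ T, |u j| ≤ |u i| := by
  have hne : (Finset.powersetCard s (univ : Finset (Fin p))).Nonempty := by
    rw [Finset.powersetCard_nonempty]
    simpa using hsp
  obtain ⟨T, hTmem, hTmax⟩ := Finset.exists_max_image _ (fun T => ∑ i ∈ T, |u i|) hne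
  rw [Finset.mem_powersetCard] at hTmem
  refine ⟨T, hTmem.2, ?_⟩
  intro i hi j hj
  by_contra hlt
  push_neg at hlt
  set T' : Finset (Fin p) := insert j (T.erase i) with hT'
  have hjT : j ∉ T.erase i := fun h => hj (Finset.mem_of_mem_erase h)
  have hcard : T'.card = s := by
    have h1 : 0 < s := hTmem.2 ▸ Finset.card_pos.mpr ⟨i, hi⟩
    rw [hT', Finset.card_insert_of_notMem hjT, Finset.card_erase_of_mem hi, hTmem.2]
    omega
  have hmem' : T' ∈ Finset.powersetCard s (univ : Finset (Fin p)) := by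
    rw [Finset.mem_powersetCard]; exact ⟨Finset.subset_univ _, hcard⟩
  have hsum : ∑ k ∈ T', |u k| = |u j| + (∑ k ∈ T, |u k| - |u i|) := by
    rw [hT', Finset.sum_insert hjT, Finset.sum_erase_eq_sub hi]
  have := hTmax T' hmem'
  rw [hsum] at this
  linarith

lemma split_lemma {p s : ℕ} (hs : 0 < s) {u : Vec p}
    (hbig : s < (univ.filter (fun i => u i ≠ 0)).card) :
    ∃ a b : Vec p, u = a + b ∧ IsSparse s a ∧ (∀ i, |a i| ≤ |u i|) ∧
      l1 u = l1 a + l1 b ∧ (∀ j, |b j| ≤ l1 a / s) ∧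
      (univ.filter (fun i => b i ≠ 0)).card ≤ (univ.filter (fun i => u i ≠ 0)).card - s := by
  have hsp : s ≤ p := by
    calc s ≤ (univ.filter (fun i => u i ≠ 0)).card := le_of_lt hbig
      _ ≤ (univ : Finset (Fin p)).card := Finset.card_le_card (Finset.filter_subset _ _)
      _ = p := by simp
  obtain ⟨T, hTcard, hTmax⟩ := exists_top_block hsp u
  set a : Vec p := fun i => if i ∈ T then u i else 0 with ha
  set b : Vec p := fun i => if i ∈ T then 0 else u i with hb
  have hab : u = a + b := by
    funext i; simp only [Pi.add_apply, ha, hb]; split <;> simp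
  have habs : ∀ i, |a i| ≤ |u i| := by
    intro i; simp only [ha]; split <;> simp [abs_nonneg]
  have hl1a : l1 a = ∑ i ∈ T, |u i| := by
    unfold l1
    rw [← Finset.sum_filter_add_sum_filter_not univ (fun i => i ∈ T)]
    have h1 : ∑ i ∈ univ.filter (fun i => i ∈ T), |a i| = ∑ i ∈ T, |u i| := by
      rw [Finset.filter_mem_eq_inter, Finset.univ_inter]
      apply Finset.sum_congr rfl; intro i hi; simp [ha, hi]
    have h2 : ∑ i ∈ univ.filter (fun i => ¬ i ∈ T), |a i| = 0 := by
      apply Finset.sum_eq_zero; intro i hi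
      simp only [mem_filter] at hi
      simp [ha, hi.2]
    rw [h1, h2, add_zero]
  have hl1 : l1 u = l1 a + l1 b := by
    unfold l1
    rw [← Finset.sum_add_distrib]
    apply Finset.sum_congr rfl; intro i _
    simp only [ha, hb]; split <;> simp
  have hl1anonneg : (0:ℝ) ≤ l1 a := hl1a ▸ Finset.sum_nonneg fun i _ => abs_nonneg _
  have hbc : ∀ j, |b j| ≤ l1 a / s := by
    intro j
    by_cases hj : j ∈ T
    · simp only [hb, hj, if_true, abs_zero]
      positivity
    · simp only [hb, hj, if_false]
      rw [le_div_iff₀ (by exact_mod_cast hs : (0:ℝ) < (s:ℝ))]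
      calc |u j| * s = ∑ _i ∈ T, |u j| := by rw [Finset.sum_const, hTcard, nsmul_eq_mul]; ring
        _ ≤ ∑ i ∈ T, |u i| := Finset.sum_le_sum fun i hi => hTmax i hi j hj
        _ = l1 a := hl1a.symm
  have hsparse_a : IsSparse s a := by
    rw [sparse_iff_card']
    calc (univ.filter (fun i => a i ≠ 0)).card ≤ T.card := by
          apply Finset.card_le_card
          intro i hi
          simp only [mem_filter, ha] at hi
          by_contra hiT
          exact hi.2 (by simp [hiT])
      _ = s := hTcard
  -- T ⊆ supp u
  have hTsub : T ⊆ univ.filter (fun i => u i ≠ 0) := by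
    have hex : ∃ j, j ∈ univ.filter (fun i => u i ≠ 0) ∧ j ∉ T := by
      by_contra hc
      push_neg at hc
      have : (univ.filter (fun i => u i ≠ 0)).card ≤ T.card :=
        Finset.card_le_card (fun j hj => hc j hj)
      omega
    obtain ⟨j0, hj0mem, hj0T⟩ := hex
    simp only [mem_filter, mem_univ, true_and] at hj0mem
    intro i hi
    simp only [mem_filter, mem_univ, true_and]
    intro hu0
    have h1 : |u j0| ≤ |u i| := hTmax i hi j0 hj0T
    rw [hu0, abs_zero] at h1
    exact hj0mem (abs_eq_zero.mp (le_antisymm h1 (abs_nonneg _)))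
  have hcardb : (univ.filter (fun i => b i ≠ 0)).card ≤
      (univ.filter (fun i => u i ≠ 0)).card - s := by
    have hsub : univ.filter (fun i => b i ≠ 0) ⊆ (univ.filter (fun i => u i ≠ 0)) \ T := by
      intro i hi
      simp only [mem_filter, mem_univ, true_and, hb] at hi
      rw [Finset.mem_sdiff]
      by_cases hiT : i ∈ T
      · simp [hiT] at hi
      · simp only [hiT, if_false] at hi
        exact ⟨by simp [hi], hiT⟩
    calc (univ.filter (fun i => b i ≠ 0)).card
        ≤ ((univ.filter (fun i => u i ≠ 0)) \ T).card := Finset.card_le_card hsub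
      _ = (univ.filter (fun i => u i ≠ 0)).card - s := by
          rw [Finset.card_sdiff_of_subset hTsub, hTcard]
  exact ⟨a, b, hab, hsparse_a, habs, hl1, hbc, hcardb⟩

lemma sparse_of_card_le {p s : ℕ} {u : Vec p}
    (h : (univ.filter (fun i => u i ≠ 0)).card ≤ s) : IsSparse s u :=
  (sparse_iff_card' u).mpr h

lemma shell_aux {p s : ℕ} (hs : 0 < s) :
    ∀ n : ℕ, ∀ u : Vec p, ∀ c : ℝ, 0 ≤ c → (univ.filter (fun i => u i ≠ 0)).card ≤ n →
    (∀ i, |u i| ≤ c) →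
    ∃ (K : ℕ) (w : Fin K → Vec p), u = ∑ k, w k ∧ (∀ k, IsSparse s (w k)) ∧
      ∑ k, l2 (w k) ≤ Real.sqrt s * c + (Real.sqrt s)⁻¹ * l1 u := by
  have hsqrt : 0 < Real.sqrt s := Real.sqrt_pos.mpr (by exact_mod_cast hs)
  intro n
  induction n with
  | zero =>
    intro u c hc hcard _
    refine ⟨1, fun _ => u, by simp, fun _ => sparse_of_card_le (u := u) (by omega), ?_⟩
    simp only [Finset.sum_const, Finset.card_univ, Fintype.card_fin, one_smul]
    have h2 : l2 u ≤ Real.sqrt s * c := sparse_l2_le (sparse_of_card_le (by omega)) hc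
      (fun i => by simpa using ‹∀ i, |u i| ≤ c› i)
    have : 0 ≤ (Real.sqrt s)⁻¹ * l1 u := mul_nonneg (by positivity) (l1_nonneg u)
    linarith
  | succ n ih =>
    intro u c hc hcard habs
    by_cases hsmall : (univ.filter (fun i => u i ≠ 0)).card ≤ s
    · refine ⟨1, fun _ => u, by simp, fun _ => sparse_of_card_le (u := u) (by omega), ?_⟩
      simp only [Finset.sum_const, Finset.card_univ, Fintype.card_fin, one_smul]
      have h2 : l2 u ≤ Real.sqrt s * c :=
        sparse_l2_le (sparse_of_card_le (by omega)) hc habs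
      have : 0 ≤ (Real.sqrt s)⁻¹ * l1 u := mul_nonneg (by positivity) (l1_nonneg u)
      linarith
    · push_neg at hsmall
      obtain ⟨a, b, hab, hsa, habsa, hl1, hbc, hcardb⟩ := split_lemma hs hsmall
      have hl1anonneg : (0:ℝ) ≤ l1 a := l1_nonneg a
      obtain ⟨K, w, hw1, hw2, hw3⟩ := ih b (l1 a / s)
        (by positivity) (by omega) hbc
      refine ⟨K + 1, Fin.cons a w, ?_, ?_, ?_⟩
      · rw [Fin.sum_cons, ← hw1, hab]
      · intro k
        refine Fin.cases ?_ ?_ k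
        · simpa using hsa
        · intro k'; simpa using hw2 k'
      · rw [Fin.sum_univ_succ]
        simp only [Fin.cons_zero, Fin.cons_succ]
        have hla : l2 a ≤ Real.sqrt s * c :=
          sparse_l2_le hsa hc (fun i => le_trans (habsa i) (habs i))
        have hkey : Real.sqrt s * (l1 a / s) = (Real.sqrt s)⁻¹ * l1 a := by
          have h2 : Real.sqrt s * Real.sqrt s = (s:ℝ) := Real.mul_self_sqrt (by positivity)
          field_simp
          linear_combination l1 a * h2
        rw [hl1]
        calc l2 a + ∑ k, l2 (w k)
            ≤ Real.sqrt s * c + (Real.sqrt s * (l1 a / s) + (Real.sqrt s)⁻¹ * l1 b) := by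
              linarith
          _ = Real.sqrt s * c + (Real.sqrt s)⁻¹ * (l1 a + l1 b) := by rw [hkey]; ring

lemma decomp {p s : ℕ} (hs : 0 < s) (u : Vec p) :
    ∃ (K : ℕ) (w : Fin K → Vec p), u = ∑ k, w k ∧ (∀ k, IsSparse s (w k)) ∧
      ∑ k, l2 (w k) ≤ l2 u + (Real.sqrt s)⁻¹ * l1 u := by
  have hsqrt : 0 < Real.sqrt s := Real.sqrt_pos.mpr (by exact_mod_cast hs)
  by_cases hsmall : (univ.filter (fun i => u i ≠ 0)).card ≤ s
  · refine ⟨1, fun _ => u, by simp, fun _ => sparse_of_card_le (u := u) (by omega), ?_⟩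
    simp only [Finset.sum_const, Finset.card_univ, Fintype.card_fin, one_smul]
    have : 0 ≤ (Real.sqrt s)⁻¹ * l1 u := mul_nonneg (by positivity) (l1_nonneg u)
    linarith
  · push_neg at hsmall
    obtain ⟨a, b, hab, hsa, habsa, hl1, hbc, hcardb⟩ := split_lemma hs hsmall
    have hl1anonneg : (0:ℝ) ≤ l1 a := l1_nonneg a
    obtain ⟨K, w, hw1, hw2, hw3⟩ := shell_aux hs _ b (l1 a / s) (by positivity) le_rfl hbc
    refine ⟨K + 1, Fin.cons a w, ?_, ?_, ?_⟩
    · rw [Fin.sum_cons, ← hw1, hab]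
    · intro k
      refine Fin.cases ?_ ?_ k
      · simpa using hsa
      · intro k'; simpa using hw2 k'
    · rw [Fin.sum_univ_succ]
      simp only [Fin.cons_zero, Fin.cons_succ]
      have hla : l2 a ≤ l2 u := by
        unfold l2
        apply Real.sqrt_le_sqrt
        apply Finset.sum_le_sum
        intro i _
        rw [← sq_abs (a i), ← sq_abs (u i)]
        exact pow_le_pow_left₀ (abs_nonneg _) (habsa i) 2
      have hkey : Real.sqrt s * (l1 a / s) = (Real.sqrt s)⁻¹ * l1 a := by
        have h2 : Real.sqrt s * Real.sqrt s = (s:ℝ) := Real.mul_self_sqrt (by positivity)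
        field_simp
        linear_combination l1 a * h2
      rw [hl1]
      calc l2 a + ∑ k, l2 (w k)
          ≤ l2 u + (Real.sqrt s * (l1 a / s) + (Real.sqrt s)⁻¹ * l1 b) := by linarith
        _ = l2 u + (Real.sqrt s)⁻¹ * (l1 a + l1 b) := by rw [hkey]; ring

lemma dotp_smul_smul {p : ℕ} (c d : ℝ) (x y : Vec p) :
    dotp (c • x) (d • y) = c * d * dotp x y := by
  unfold dotp
  rw [Finset.mul_sum]
  apply Finset.sum_congr rfl; intro i _
  simp [Pi.smul_apply, smul_eq_mul]; ring

lemma theta_nonneg {p : ℕ} {s : ℝ} (hs : 0 ≤ s) (u v : Vec p) : 0 ≤ theta s u v := by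
  unfold theta
  have h1 : 0 ≤ (Real.sqrt s)⁻¹ := by positivity
  apply mul_nonneg <;>
    exact add_nonneg (l2_nonneg _) (mul_nonneg h1 (l1_nonneg _))

lemma matrix_decomp {p : ℕ} (A : Mat p) :
    A = ∑ i, Matrix.vecMulVec (Pi.single i 1) (A i) := by
  funext j k
  rw [Matrix.sum_apply]
  simp only [Matrix.vecMulVec, Matrix.of_apply, Pi.single_apply]
  simp [Finset.sum_ite_eq]

lemma mixedNorm_set_nonempty {p : ℕ} (s : ℝ) (A : Mat p) :
    { t | ∃ (K : ℕ) (u v : Fin K → Vec p),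
      A = ∑ k, Matrix.vecMulVec (u k) (v k) ∧ t = ∑ k, theta s (u k) (v k) }.Nonempty :=
  ⟨_, p, fun i => Pi.single i 1, fun i => A i, matrix_decomp A, rfl⟩

lemma bddAbove_sparse_set {p s : ℕ} (Z : Mat p) :
    BddAbove {t | ∃ u v : Vec p, l2 u ≤ 1 ∧ l2 v ≤ 1 ∧ IsSparse s u ∧ IsSparse s v ∧
      t = dotp (Z.mulVec u) v} := by
  refine ⟨∑ i, ∑ j, |Z i j|, ?_⟩
  rintro t ⟨u, v, hu, hv, _, _, rfl⟩
  unfold dotp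
  have hmv : ∀ i, Z.mulVec u i = ∑ j, Z i j * u j := fun i => by
    simp [Matrix.mulVec, dotProduct]
  calc ∑ i, Z.mulVec u i * v i ≤ ∑ i, ∑ j, |Z i j| := by
        apply Finset.sum_le_sum; intro i _
        rw [hmv i]
        calc (∑ j, Z i j * u j) * v i ≤ |(∑ j, Z i j * u j) * v i| := le_abs_self _
          _ = |∑ j, Z i j * u j| * |v i| := abs_mul _ _
          _ ≤ (∑ j, |Z i j| * |u j|) * |v i| := by
              apply mul_le_mul_of_nonneg_right _ (abs_nonneg _)
              calc |∑ j, Z i j * u j| ≤ ∑ j, |Z i j * u j| := Finset.abs_sum_le_sum_abs _ _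
                _ = ∑ j, |Z i j| * |u j| := by
                    apply Finset.sum_congr rfl; intro j _; exact abs_mul _ _
          _ ≤ ∑ j, |Z i j| := by
              have h1 : |v i| ≤ 1 := le_trans (abs_le_l2 v i) hv
              calc (∑ j, |Z i j| * |u j|) * |v i| ≤ (∑ j, |Z i j| * |u j|) * 1 := by
                    apply mul_le_mul_of_nonneg_left h1
                    exact Finset.sum_nonneg fun j _ =>
                      mul_nonneg (abs_nonneg _) (abs_nonneg _)
                _ = ∑ j, |Z i j| * |u j| := mul_one _
                _ ≤ ∑ j, |Z i j| := by
                    apply Finset.sum_le_sum; intro j _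
                    calc |Z i j| * |u j| ≤ |Z i j| * 1 :=
                          mul_le_mul_of_nonneg_left (le_trans (abs_le_l2 u j) hu)
                            (abs_nonneg _)
                      _ = |Z i j| := mul_one _

lemma rank1_bound {p s : ℕ} (Z : Mat p) {M : ℝ}
    (hub : ∀ u v : Vec p, l2 u ≤ 1 → l2 v ≤ 1 → IsSparse s u → IsSparse s v →
      dotp (Z.mulVec u) v ≤ M)
    {a b : Vec p} (hsa : IsSparse s a) (hsb : IsSparse s b) :
    frob Z (Matrix.vecMulVec a b) ≤ l2 a * l2 b * M := by
  by_cases ha0 : l2 a = 0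
  · rw [l2_eq_zero ha0]
    have h00 : Matrix.vecMulVec (0 : Vec p) b = 0 := by
      funext i j; simp [Matrix.vecMulVec]
    rw [h00]
    simp [frob, l2]
  by_cases hb0 : l2 b = 0
  · rw [l2_eq_zero hb0]
    have h00 : Matrix.vecMulVec a (0 : Vec p) = 0 := by
      funext i j; simp [Matrix.vecMulVec]
    rw [h00]
    simp [frob, l2]
  have ha : 0 < l2 a := lt_of_le_of_ne (l2_nonneg a) (Ne.symm ha0)
  have hb : 0 < l2 b := lt_of_le_of_ne (l2_nonneg b) (Ne.symm hb0)
  set a' := (l2 a)⁻¹ • a with ha'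
  set b' := (l2 b)⁻¹ • b with hb'
  have haa : a = l2 a • a' := by
    rw [ha', smul_smul, mul_inv_cancel₀ (ne_of_gt ha), one_smul]
  have hbb : b = l2 b • b' := by
    rw [hb', smul_smul, mul_inv_cancel₀ (ne_of_gt hb), one_smul]
  have hla' : l2 a' = 1 := by
    rw [ha', l2_smul, abs_of_pos (inv_pos.mpr ha), inv_mul_cancel₀ (ne_of_gt ha)]
  have hlb' : l2 b' = 1 := by
    rw [hb', l2_smul, abs_of_pos (inv_pos.mpr hb), inv_mul_cancel₀ (ne_of_gt hb)]
  have hle : dotp (Z.mulVec b') a' ≤ M :=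
    hub b' a' (le_of_eq hlb') (le_of_eq hla') (sparse_smul _ hsb) (sparse_smul _ hsa)
  rw [frob_vecMulVec]
  calc dotp (Z.mulVec b) a = dotp (Z.mulVec (l2 b • b')) (l2 a • a') := by
        rw [← haa, ← hbb]
    _ = l2 b * l2 a * dotp (Z.mulVec b') a' := by
        rw [Matrix.mulVec_smul, dotp_smul_smul]
    _ ≤ l2 b * l2 a * M := by
        apply mul_le_mul_of_nonneg_left hle
        exact mul_nonneg (le_of_lt hb) (le_of_lt ha)
    _ = l2 a * l2 b * M := by ring

lemma rank1_bound' {p s : ℕ} (hs : 0 < s) (Z : Mat p) {M : ℝ} (hM0 : 0 ≤ M)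
    (hub : ∀ u v : Vec p, l2 u ≤ 1 → l2 v ≤ 1 → IsSparse s u → IsSparse s v →
      dotp (Z.mulVec u) v ≤ M)
    (u v : Vec p) :
    frob Z (Matrix.vecMulVec u v) ≤ theta s u v * M := by
  obtain ⟨K, w, hw1, hw2, hw3⟩ := decomp hs u
  obtain ⟨L, x, hx1, hx2, hx3⟩ := decomp hs v
  have hdecomp : Matrix.vecMulVec u v = ∑ k, ∑ l, Matrix.vecMulVec (w k) (x l) := by
    rw [hw1, hx1]
    exact vecMulVec_sum w x
  rw [hdecomp, frob_sum]
  have hsum1 : ∑ k, frob Z (∑ l, Matrix.vecMulVec (w k) (x l)) =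
      ∑ k, ∑ l, frob Z (Matrix.vecMulVec (w k) (x l)) := by
    apply Finset.sum_congr rfl; intro k _; exact frob_sum Z _
  rw [hsum1]
  have hw0 : 0 ≤ ∑ k, l2 (w k) := Finset.sum_nonneg fun k _ => l2_nonneg _
  have hx0 : 0 ≤ ∑ l, l2 (x l) := Finset.sum_nonneg fun l _ => l2_nonneg _
  calc ∑ k, ∑ l, frob Z (Matrix.vecMulVec (w k) (x l))
      ≤ ∑ k, ∑ l, l2 (w k) * l2 (x l) * M := by
        apply Finset.sum_le_sum; intro k _
        apply Finset.sum_le_sum; intro l _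
        exact rank1_bound Z hub (hw2 k) (hx2 l)
    _ = (∑ k, l2 (w k)) * (∑ l, l2 (x l)) * M := by
        rw [Finset.sum_mul_sum, Finset.sum_mul]
        apply Finset.sum_congr rfl; intro k _
        rw [Finset.sum_mul]
    _ ≤ theta s u v * M := by
        apply mul_le_mul_of_nonneg_right _ hM0
        unfold theta
        push_cast
        apply mul_le_mul hw3 hx3 hx0 (le_trans hw0 hw3)

lemma frob_le_mixed {p s : ℕ} (hs : 0 < s) (Z : Mat p) {M : ℝ} (hM0 : 0 ≤ M)
    (hub : ∀ u v : Vec p, l2 u ≤ 1 → l2 v ≤ 1 → IsSparse s u → IsSparse s v →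
      dotp (Z.mulVec u) v ≤ M)
    (A : Mat p) :
    frob Z A ≤ mixedNorm s A * M := by
  have hforall : ∀ r ∈ { t | ∃ (K : ℕ) (u v : Fin K → Vec p),
      A = ∑ k, Matrix.vecMulVec (u k) (v k) ∧ t = ∑ k, theta s (u k) (v k) },
      frob Z A ≤ r * M := by
    rintro r ⟨K, u, v, hA, rfl⟩
    rw [hA, frob_sum, Finset.sum_mul]
    apply Finset.sum_le_sum; intro k _
    exact rank1_bound' hs Z hM0 hub _ _
  rcases eq_or_lt_of_le hM0 with hMeq | hMlt
  · obtain ⟨r, hr⟩ := mixedNorm_set_nonempty (s:ℝ) A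
    have h1 := hforall r hr
    rw [← hMeq] at h1 ⊢
    simpa using h1
  · have hdiv : frob Z A / M ≤ mixedNorm s A := by
      apply le_csInf (mixedNorm_set_nonempty _ _)
      intro r hr
      rw [div_le_iff₀ hMlt]
      exact hforall r hr
    calc frob Z A = (frob Z A / M) * M := by field_simp
      _ ≤ mixedNorm s A * M := mul_le_mul_of_nonneg_right hdiv hMlt.le

/-- Lemma A.1, consequence. The sup of `⟨Z,A⟩` over the mixed-atomic-norm ball is
at most the sup of `⟨Zu,v⟩` over s-sparse pairs of vectors in the Euclidean unit ball. -/
theorem sup_mixed_ball_le_sup_sparse {p s : ℕ} (hs : 0 < s) (Z : Mat p) :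
    sSup {t | ∃ A : Mat p, mixedNorm (s : ℝ) A ≤ 1 ∧ t = frob Z A} ≤
    sSup {t | ∃ u v : Vec p, l2 u ≤ 1 ∧ l2 v ≤ 1 ∧ IsSparse s u ∧ IsSparse s v ∧
      t = dotp (Z.mulVec u) v} := by
  set S2 := {t | ∃ u v : Vec p, l2 u ≤ 1 ∧ l2 v ≤ 1 ∧ IsSparse s u ∧ IsSparse s v ∧
      t = dotp (Z.mulVec u) v} with hS2
  set M := sSup S2 with hM
  have hBdd2 : BddAbove S2 := bddAbove_sparse_set Z
  have h0 : (0:ℝ) ∈ S2 := by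
    have hsp0 : IsSparse s (0 : Vec p) := by unfold IsSparse; simp
    exact ⟨0, 0, by simp [l2], by simp [l2], hsp0, hsp0, by simp [dotp]⟩
  have hM0 : 0 ≤ M := le_csSup hBdd2 h0
  have hub : ∀ u v : Vec p, l2 u ≤ 1 → l2 v ≤ 1 → IsSparse s u → IsSparse s v →
      dotp (Z.mulVec u) v ≤ M := fun u v hu hv hsu hsv =>
    le_csSup hBdd2 ⟨u, v, hu, hv, hsu, hsv, rfl⟩
  apply Real.sSup_le _ hM0
  rintro t ⟨A, hA1, rfl⟩
  calc frob Z A ≤ mixedNorm s A * M := frob_le_mixed hs Z hM0 hub A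
    _ ≤ 1 * M := mul_le_mul_of_nonneg_right hA1 hM0
    _ = M := one_mul M
end
end

section
/- Suppose β ∈ ℝ^p is s-sparse with support set I, let B = β ⊗ β, and let w_β = β/‖β‖₂ + s^{-1/2}·sign(β). If ũ, ṽ ∈ ℝ^p are supported on the complement of I with ‖ũ‖_∞ ≤ 1 and ‖ṽ‖_∞ ≤ 1, then W = w_β ⊗ w_β + s^{-1/2}·(w_β ⊗ ũ + ṽ ⊗ w_β) is a subgradient of the mixed atomic norm at B: ⟨Wβ, β⟩ = θ_s(β,β) and ⟨Wu, v⟩ ≤ θ_s(u,v) for all u, v ∈ ℝ^p. -/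
open MeasureTheory ProbabilityTheory Finset

noncomputable section

section Aux

variable {p : ℕ}

lemma dotp_vmv (a b u v : Vec p) :
    dotp ((Matrix.vecMulVec a b).mulVec u) v = dotp b u * dotp a v := by
  simp only [dotp, Matrix.mulVec, dotProduct, Matrix.vecMulVec_apply]
  trans ∑ i, (a i * v i) * ∑ j, b j * u j
  · refine Finset.sum_congr rfl fun i _ => ?_
    have h : (∑ j, a i * b j * u j) = a i * ∑ j, b j * u j := by
      rw [Finset.mul_sum]
      exact Finset.sum_congr rfl fun j _ => by ring
    rw [h]; ring
  · rw [← Finset.sum_mul]; ring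

lemma dotp_add_left' (x y v : Vec p) : dotp (x + y) v = dotp x v + dotp y v := by
  simp [dotp, add_mul, Finset.sum_add_distrib]

lemma dotp_smul_left' (c : ℝ) (x v : Vec p) : dotp (c • x) v = c * dotp x v := by
  simp [dotp, Finset.mul_sum, mul_assoc]

lemma sign_mul_self' (x : ℝ) : Real.sign x * x = |x| := by
  rcases lt_trichotomy x 0 with h | h | h
  · rw [Real.sign_of_neg h, abs_of_neg h]; ring
  · simp [h]
  · rw [Real.sign_of_pos h, abs_of_pos h]; ring

lemma abs_sign_le_one' (x : ℝ) : |Real.sign x| ≤ 1 := by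
  rcases lt_trichotomy x 0 with h | h | h
  · rw [Real.sign_of_neg h]; norm_num
  · simp [h]
  · rw [Real.sign_of_pos h]; norm_num

lemma abs_dotp_le' (u v : Vec p) : |dotp u v| ≤ l2 u * l2 v := by
  show |dotp u v| ≤ Real.sqrt (∑ i, u i ^ 2) * Real.sqrt (∑ i, v i ^ 2)
  rw [← Real.sqrt_mul (by positivity), ← Real.sqrt_sq_eq_abs]
  exact Real.sqrt_le_sqrt (Finset.sum_mul_sq_le_sq_mul_sq _ _ _)

end Aux

/-- Lemma A.2, case 1. Perturbations of `w_β ⊗ w_β` by bounded off-support terms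
are subgradients of the mixed atomic norm at `β ⊗ β`. -/
theorem subgradient_case_one {p s : ℕ} (hs : 0 < s) (β : Vec p)
    (hβ : IsSparse s β) (hβ0 : β ≠ 0) (ut vt : Vec p)
    (hut_supp : ∀ i, β i ≠ 0 → ut i = 0) (hvt_supp : ∀ i, β i ≠ 0 → vt i = 0)
    (hut_inf : ∀ i, |ut i| ≤ 1) (hvt_inf : ∀ i, |vt i| ≤ 1) :
    let w : Vec p := fun i => β i / l2 β + (Real.sqrt (s : ℝ))⁻¹ * Real.sign (β i)
    let W : Mat p := Matrix.vecMulVec w w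
      + (Real.sqrt (s : ℝ))⁻¹ • (Matrix.vecMulVec w ut + Matrix.vecMulVec vt w)
    dotp (W.mulVec β) β = theta (s : ℝ) β β ∧
    ∀ u v : Vec p, dotp (W.mulVec u) v ≤ theta (s : ℝ) u v := by
  intro w W
  set c : ℝ := (Real.sqrt (s : ℝ))⁻¹ with hcdef
  have hsp : (0:ℝ) < Real.sqrt s := Real.sqrt_pos.2 (by exact_mod_cast hs)
  have hc : 0 ≤ c := by positivity
  have hL : 0 < l2 β := by
    obtain ⟨i, hi⟩ := Function.ne_iff.mp hβ0
    have hpos : 0 < ∑ j, β j ^ 2 :=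
      Finset.sum_pos' (fun j _ => sq_nonneg _) ⟨i, Finset.mem_univ i, pow_two_pos_of_ne_zero hi⟩
    exact Real.sqrt_pos.2 hpos
  have hW : ∀ u v : Vec p, dotp (W.mulVec u) v
      = dotp w u * dotp w v + c * (dotp ut u * dotp w v) + c * (dotp w u * dotp vt v) := by
    intro u v
    show dotp ((Matrix.vecMulVec w w
      + c • (Matrix.vecMulVec w ut + Matrix.vecMulVec vt w)).mulVec u) v = _
    rw [Matrix.add_mulVec, Matrix.smul_mulVec, Matrix.add_mulVec,
      dotp_add_left', dotp_smul_left', dotp_add_left', dotp_vmv, dotp_vmv, dotp_vmv]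
    ring
  have hwβ : dotp w β = l2 β + c * l1 β := by
    have h1 : ∀ i, w i * β i = β i ^ 2 / l2 β + c * |β i| := by
      intro i
      show (β i / l2 β + c * Real.sign (β i)) * β i = _
      rw [add_mul, div_mul_eq_mul_div, ← sq, mul_assoc, sign_mul_self']
    calc dotp w β = ∑ i, (β i ^ 2 / l2 β + c * |β i|) :=
          Finset.sum_congr rfl fun i _ => h1 i
      _ = (∑ i, β i ^ 2) / l2 β + c * l1 β := by
          rw [Finset.sum_add_distrib, ← Finset.sum_div, ← Finset.mul_sum]; rfl
      _ = l2 β + c * l1 β := by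
          have hsq : (∑ i, β i ^ 2) = l2 β ^ 2 := by
            show _ = Real.sqrt (∑ i, β i ^ 2) ^ 2
            rw [Real.sq_sqrt (by positivity)]
          rw [hsq, sq, mul_div_assoc, div_self hL.ne', mul_one]
  have hzero : ∀ z : Vec p, (∀ i, β i ≠ 0 → z i = 0) → dotp z β = 0 := by
    intro z hz
    refine Finset.sum_eq_zero fun i _ => ?_
    by_cases h : β i = 0
    · simp [h]
    · simp [hz i h]
  have key : ∀ z : Vec p, (∀ i, β i ≠ 0 → z i = 0) → (∀ i, |z i| ≤ 1) →
      ∀ u : Vec p, |dotp w u| + c * |dotp z u| ≤ l2 u + c * l1 u := by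
    intro z hz hz1 u
    have hw : dotp w u = dotp β u / l2 β + c * dotp (fun i => Real.sign (β i)) u := by
      calc dotp w u = ∑ i, (β i * u i / l2 β + c * (Real.sign (β i) * u i)) := by
            refine Finset.sum_congr rfl fun i _ => ?_
            show (β i / l2 β + c * Real.sign (β i)) * u i = _
            ring
        _ = dotp β u / l2 β + c * dotp (fun i => Real.sign (β i)) u := by
            rw [Finset.sum_add_distrib, ← Finset.sum_div, ← Finset.mul_sum]; rfl
    have hsign : |dotp (fun i => Real.sign (β i)) u|
        ≤ ∑ i, (if β i ≠ 0 then |u i| else 0) := by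
      refine (Finset.abs_sum_le_sum_abs _ _).trans (Finset.sum_le_sum fun i _ => ?_)
      by_cases h : β i = 0
      · simp [h]
      · simp only [h, ne_eq, not_false_eq_true, if_true]
        rw [abs_mul]
        exact mul_le_of_le_one_left (abs_nonneg _) (abs_sign_le_one' _)
    have hzb : |dotp z u| ≤ ∑ i, (if β i ≠ 0 then 0 else |u i|) := by
      refine (Finset.abs_sum_le_sum_abs _ _).trans (Finset.sum_le_sum fun i _ => ?_)
      by_cases h : β i = 0
      · simp only [h, ne_eq, not_true_eq_false, if_false]
        rw [abs_mul]
        exact mul_le_of_le_one_left (abs_nonneg _) (hz1 i)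
      · simp [hz i h, h]
    have hsum : (∑ i, (if β i ≠ 0 then |u i| else 0))
        + (∑ i, (if β i ≠ 0 then 0 else |u i|)) = l1 u := by
      rw [← Finset.sum_add_distrib]
      refine Finset.sum_congr rfl fun i _ => ?_
      by_cases h : β i = 0 <;> simp [h]
    have habs : |dotp w u| ≤ l2 u + c * ∑ i, (if β i ≠ 0 then |u i| else 0) := by
      rw [hw]
      refine (abs_add_le _ _).trans ?_
      have h1 : |dotp β u / l2 β| ≤ l2 u := by
        rw [abs_div, abs_of_pos hL, div_le_iff₀ hL]
        calc |dotp β u| ≤ l2 β * l2 u := abs_dotp_le' _ _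
          _ = l2 u * l2 β := by ring
      have h2 : |c * dotp (fun i => Real.sign (β i)) u|
          ≤ c * ∑ i, (if β i ≠ 0 then |u i| else 0) := by
        rw [abs_mul, abs_of_nonneg hc]
        exact mul_le_mul_of_nonneg_left hsign hc
      linarith
    calc |dotp w u| + c * |dotp z u|
        ≤ (l2 u + c * ∑ i, (if β i ≠ 0 then |u i| else 0))
          + c * ∑ i, (if β i ≠ 0 then 0 else |u i|) :=
          add_le_add habs (mul_le_mul_of_nonneg_left hzb hc)
      _ = l2 u + c * l1 u := by rw [← hsum]; ring
  constructor
  · rw [hW, hzero ut hut_supp, hzero vt hvt_supp, hwβ]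
    show _ = (l2 β + c * l1 β) * (l2 β + c * l1 β)
    ring
  · intro u v
    rw [hW u v]
    have hA := key ut hut_supp hut_inf u
    have hB := key vt hvt_supp hvt_inf v
    set a1 := dotp w u
    set a2 := dotp ut u
    set b1 := dotp w v
    set b2 := dotp vt v
    have t1 : a1 * b1 ≤ |a1| * |b1| := by rw [← abs_mul]; exact le_abs_self _
    have t2 : a2 * b1 ≤ |a2| * |b1| := by rw [← abs_mul]; exact le_abs_self _
    have t3 : a1 * b2 ≤ |a1| * |b2| := by rw [← abs_mul]; exact le_abs_self _
    have hstep : a1 * b1 + c * (a2 * b1) + c * (a1 * b2)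
        ≤ (|a1| + c * |a2|) * (|b1| + c * |b2|) := by
      nlinarith [mul_le_mul_of_nonneg_left t2 hc, mul_le_mul_of_nonneg_left t3 hc,
        mul_nonneg (mul_nonneg hc (abs_nonneg a2)) (mul_nonneg hc (abs_nonneg b2))]
    have hm : (|a1| + c * |a2|) * (|b1| + c * |b2|)
        ≤ (l2 u + c * l1 u) * (l2 v + c * l1 v) :=
      mul_le_mul hA hB (by positivity) (le_trans (by positivity) hA)
    show a1 * b1 + c * (a2 * b1) + c * (a1 * b2)
        ≤ (l2 u + c * l1 u) * (l2 v + c * l1 v)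
    linarith
end
end
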